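/- arXiv:1211.6156 — 2 statements merged into one kernel-verified Lean document; each statement's English description precedes it below -/
import Mathlib

section
/- Let a : (0, t₂] → ℝ be twice differentiable with a > 0, ȧ > 0, ä > 0 on (0, t₂], and suppose ä(t)a(t)/ȧ(t)² → +∞ and ȧ(t) → α ∈ (0, +∞] as t → 0⁺. Then ∫_0^{t₂} du/a(u) is finite (the improper integral converges). -/
open Set Filter Topology MeasureTheory

theorem stmt11 (t₂ : ℝ) (ht₂ : 0 < t₂) (a : ℝ → ℝ)
    (hdiff : ∀ t ∈ Ioc (0:ℝ) t₂, DifferentiableAt ℝ a t ∧ DifferentiableAt ℝ (deriv a) t)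
    (hpos : ∀ t ∈ Ioc (0:ℝ) t₂, 0 < a t)
    (hda : ∀ t ∈ Ioc (0:ℝ) t₂, 0 < deriv a t)
    (hdda : ∀ t ∈ Ioc (0:ℝ) t₂, 0 < deriv (deriv a) t)
    (hlim : Tendsto (fun t => deriv (deriv a) t * a t / (deriv a t) ^ 2)
      (𝓝[>] (0:ℝ)) atTop)
    (hα : (∃ α : ℝ, 0 < α ∧ Tendsto (deriv a) (𝓝[>] (0:ℝ)) (𝓝 α)) ∨
      Tendsto (deriv a) (𝓝[>] (0:ℝ)) atTop) :
    IntegrableOn (fun u => 1 / a u) (Ioc 0 t₂) := by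
  have hconta : ContinuousOn a (Ioc 0 t₂) := fun t ht =>
    ((hdiff t ht).1.continuousAt).continuousWithinAt
  have hcontd : ContinuousOn (deriv a) (Ioc 0 t₂) := fun t ht =>
    ((hdiff t ht).2.continuousAt).continuousWithinAt
  -- deriv a is strictly monotone on (0, t₂]
  have hmono : StrictMonoOn (deriv a) (Ioc 0 t₂) := by
    apply strictMonoOn_of_deriv_pos (convex_Ioc _ _) hcontd
    intro x hx
    rw [interior_Ioc] at hx
    exact hdda x ⟨hx.1, hx.2.le⟩
  -- positive lower bound for deriv a
  obtain ⟨m, hm, hmle⟩ : ∃ m : ℝ, 0 < m ∧ ∀ t ∈ Ioc (0:ℝ) t₂, m ≤ deriv a t := by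
    rcases hα with ⟨α, hαpos, hαlim⟩ | htop
    · refine ⟨α, hαpos, fun t ht => ?_⟩
      refine le_of_tendsto hαlim ?_
      filter_upwards [Ioo_mem_nhdsGT_of_mem (⟨le_refl 0, ht.1⟩ : (0:ℝ) ∈ Ico 0 t)] with s hs
      exact (hmono ⟨hs.1, hs.2.le.trans ht.2⟩ ht hs.2).le
    · exfalso
      obtain ⟨t, hgt, ht⟩ := ((htop.eventually (eventually_gt_atTop (deriv a t₂))).and
        (Ioo_mem_nhdsGT_of_mem (⟨le_refl 0, ht₂⟩ : (0:ℝ) ∈ Ico 0 t₂))).exists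
      exact absurd (hmono ⟨ht.1, ht.2.le⟩ ⟨ht₂, le_refl t₂⟩ ht.2) (not_lt.2 hgt.le)
  -- choose t₀ where the key inequality holds
  obtain ⟨u, hu, hu'⟩ := mem_nhdsGT_iff_exists_Ioc_subset.1
    (hlim.eventually (eventually_ge_atTop 1))
  set t₀ : ℝ := min u t₂ with ht₀def
  have ht₀pos : 0 < t₀ := lt_min hu ht₂
  have ht₀le : t₀ ≤ t₂ := min_le_right _ _
  have hsub : ∀ t ∈ Ioc (0:ℝ) t₀, t ∈ Ioc (0:ℝ) t₂ :=
    fun t ht => ⟨ht.1, ht.2.trans ht₀le⟩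
  -- pointwise bound 1/a ≤ ä/ȧ² on (0, t₀]
  have hkey : ∀ t ∈ Ioc (0:ℝ) t₀, 1 / a t ≤ deriv (deriv a) t / (deriv a t) ^ 2 := by
    intro t ht
    have htm := hsub t ht
    have h1 : (1:ℝ) ≤ deriv (deriv a) t * a t / (deriv a t) ^ 2 :=
      hu' ⟨ht.1, ht.2.trans (min_le_left _ _)⟩
    have hap := hpos t htm
    have hdp := hda t htm
    have hsq : (0:ℝ) < (deriv a t) ^ 2 := by positivity
    rw [le_div_iff₀ hsq, one_mul] at h1
    rw [div_le_div_iff₀ hap hsq, one_mul]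
    nlinarith
  -- the comparison function and its antiderivative
  set g : ℝ → ℝ := fun t => deriv (deriv a) t / (deriv a t) ^ 2 with hgdef
  have hgderiv : ∀ t ∈ Ioc (0:ℝ) t₂, HasDerivAt (fun s => -(deriv a s)⁻¹) (g t) t := by
    intro t ht
    have h1 : HasDerivAt (deriv a) (deriv (deriv a) t) t := (hdiff t ht).2.hasDerivAt
    have h2 := (h1.inv (ne_of_gt (hda t ht))).neg
    simp only [hgdef, neg_div, neg_neg] at h2 ⊢
    exact h2
  -- continuity of 1/a on (0, t₂]
  have hinvcont : ContinuousOn (fun u => 1 / a u) (Ioc 0 t₂) := by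
    exact ContinuousOn.div continuousOn_const hconta (fun t ht => ne_of_gt (hpos t ht))
  -- integrability on (t₀, t₂]
  have hI2 : IntegrableOn (fun u => 1 / a u) (Ioc t₀ t₂) := by
    have : IntegrableOn (fun u => 1 / a u) (Icc t₀ t₂) :=
      (hinvcont.mono (fun x hx => ⟨ht₀pos.trans_le hx.1, hx.2⟩)).integrableOn_Icc
    exact this.mono_set Ioc_subset_Icc_self
  -- integrability on (0, t₀] via uniform bound on shrinking intervals
  have hI1 : IntegrableOn (fun u => 1 / a u) (Ioc 0 t₀) := by
    set e : ℕ → ℝ := fun n => t₀ / (n + 1) with hedef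
    have hepos : ∀ n, 0 < e n := fun n => by positivity
    have hele : ∀ n, e n ≤ t₀ := fun n => by
      rw [hedef]
      rw [div_le_iff₀ (by positivity)]
      nlinarith [ht₀pos, Nat.cast_nonneg (α := ℝ) n]
    have hIccsub : ∀ n, Icc (e n) t₀ ⊆ Ioc (0:ℝ) t₂ :=
      fun n x hx => ⟨(hepos n).trans_le hx.1, hx.2.trans ht₀le⟩
    have heten : Tendsto e atTop (𝓝 0) := by
      apply Tendsto.div_atTop (tendsto_const_nhds (x := t₀))
      exact tendsto_atTop_add_const_right _ 1 tendsto_natCast_atTop_atTop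
    have hfi : ∀ n, IntegrableOn (fun u => 1 / a u) (Ioc (e n) t₀) := by
      intro n
      exact ((hinvcont.mono (hIccsub n)).integrableOn_Icc).mono_set Ioc_subset_Icc_self
    apply integrableOn_Ioc_of_intervalIntegral_norm_bounded_left
      (I := m⁻¹) hfi heten
    filter_upwards with n
    have hFcont : ContinuousOn (fun s => -(deriv a s)⁻¹) (Icc (e n) t₀) :=
      ((hcontd.mono (hIccsub n)).inv₀ (fun x hx => ne_of_gt (hda x (hIccsub n hx)))).neg
    have hgint : IntegrableOn g (Ioc (e n) t₀) := by
      apply intervalIntegral.integrableOn_deriv_of_nonneg hFcont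
        (fun x hx => hgderiv x (hIccsub n (Ioo_subset_Icc_self hx)))
      intro x hx
      have h1 := hdda x (hIccsub n (Ioo_subset_Icc_self hx))
      have h2 := hda x (hIccsub n (Ioo_subset_Icc_self hx))
      rw [hgdef]
      positivity
    have hnorm : ∫ x in Ioc (e n) t₀, ‖1 / a x‖ = ∫ x in Ioc (e n) t₀, 1 / a x := by
      apply setIntegral_congr_fun measurableSet_Ioc
      intro x hx
      have hax := hpos x (hsub x ⟨(hepos n).trans hx.1, hx.2⟩)
      exact Real.norm_of_nonneg (by positivity)
    have hle : ∫ x in Ioc (e n) t₀, 1 / a x ≤ ∫ x in Ioc (e n) t₀, g x :=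
      setIntegral_mono_on (hfi n) hgint measurableSet_Ioc
        (fun x hx => hkey x ⟨(hepos n).trans hx.1, hx.2⟩)
    have hFTC : ∫ x in (e n)..t₀, g x = -(deriv a t₀)⁻¹ - -(deriv a (e n))⁻¹ := by
      have := intervalIntegral.integral_eq_sub_of_hasDerivAt
        (f := fun s => -(deriv a s)⁻¹) (f' := g) (a := e n) (b := t₀)
        (fun x hx => by rw [uIcc_of_le (hele n)] at hx; exact hgderiv x (hIccsub n hx))
        ((intervalIntegrable_iff_integrableOn_Ioc_of_le (hele n)).2 hgint)
      simpa using this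
    have h2 : ∫ x in Ioc (e n) t₀, g x = (deriv a (e n))⁻¹ - (deriv a t₀)⁻¹ := by
      rw [← intervalIntegral.integral_of_le (hele n), hFTC]; ring
    have h3 : (deriv a (e n))⁻¹ ≤ m⁻¹ := by
      have := hmle (e n) ⟨hepos n, (hele n).trans ht₀le⟩
      gcongr
    have h4 : (0:ℝ) ≤ (deriv a t₀)⁻¹ :=
      (inv_pos.2 (hda t₀ ⟨ht₀pos, ht₀le⟩)).le
    rw [hnorm]
    linarith
  have : Ioc (0:ℝ) t₀ ∪ Ioc t₀ t₂ = Ioc (0:ℝ) t₂ := Ioc_union_Ioc_eq_Ioc ht₀pos.le ht₀le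
  rw [← this]
  exact hI1.union hI2
end

section
/- Suppose the FRW field equations hold: ä/a = -(1/6)(μ+3p) and 3ȧ² = μa² - 3K, with p = (γ-1)μ(1+o(1)) as t → 0⁺ for a constant γ, and ȧ(t)² → +∞ as t → 0⁺. Then ä a/ȧ² → -(1/2)(3γ-2) as t → 0⁺; in particular if γ < 2/3 this limit is strictly positive. -/
open Set Filter Topology

theorem stmt16 (t₁ : ℝ) (ht₁ : 0 < t₁) (a μ p f : ℝ → ℝ) (γ K : ℝ)
    (hapos : ∀ t ∈ Ioc (0:ℝ) t₁, 0 < a t)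
    (hμpos : ∀ t ∈ Ioc (0:ℝ) t₁, 0 < μ t)
    (hray : ∀ t ∈ Ioc (0:ℝ) t₁,
      deriv (deriv a) t / a t = -(1 / 6) * (μ t + 3 * p t))
    (hfried : ∀ t ∈ Ioc (0:ℝ) t₁,
      3 * (deriv a t) ^ 2 = μ t * (a t) ^ 2 - 3 * K)
    (heos : ∀ t ∈ Ioc (0:ℝ) t₁, p t = (γ - 1) * μ t * (1 + f t))
    (hf : Tendsto f (𝓝[>] (0:ℝ)) (𝓝 0))
    (hda : Tendsto (fun t => (deriv a t) ^ 2) (𝓝[>] (0:ℝ)) atTop) :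
    Tendsto (fun t => deriv (deriv a) t * a t / (deriv a t) ^ 2)
      (𝓝[>] (0:ℝ)) (𝓝 (-(1 / 2) * (3 * γ - 2))) ∧
    (γ < 2 / 3 → 0 < -(1 / 2) * (3 * γ - 2)) := by
  constructor
  · have hmem : Ioc (0:ℝ) t₁ ∈ 𝓝[>] (0:ℝ) := Ioc_mem_nhdsGT_of_mem ⟨le_refl 0, ht₁⟩
    have hne : ∀ᶠ t in 𝓝[>] (0:ℝ), (deriv a t) ^ 2 ≠ 0 :=
      (hda.eventually_ge_atTop 1).mono fun t ht => by nlinarith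
    have heq : ∀ᶠ t in 𝓝[>] (0:ℝ),
        -(1/2) * (1 + K / (deriv a t) ^ 2) * (1 + 3 * (γ - 1) * (1 + f t))
          = deriv (deriv a) t * a t / (deriv a t) ^ 2 := by
      filter_upwards [hmem, hne] with t ht hne
      have ha := hapos t ht
      have h1 := hray t ht
      have h2 := hfried t ht
      have h3 := heos t ht
      have ha' : a t ≠ 0 := ne_of_gt ha
      have hdd : deriv (deriv a) t = -(1/6) * (μ t + 3 * p t) * a t := by
        field_simp at h1; linarith
      have key : deriv (deriv a) t * a t
          = -(1/2) * (1 + 3 * (γ - 1) * (1 + f t)) * ((deriv a t) ^ 2 + K) := by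
        rw [hdd, h3]
        linear_combination ((1/6) * (1 + 3 * (γ - 1) * (1 + f t))) * h2
      rw [key]
      have hd : deriv a t ≠ 0 := by rintro h; simp [h] at hne
      field_simp
    have hK : Tendsto (fun t => K / (deriv a t) ^ 2) (𝓝[>] (0:ℝ)) (𝓝 0) :=
      Tendsto.div_atTop tendsto_const_nhds hda
    have hmain : Tendsto
        (fun t => -(1/2) * (1 + K / (deriv a t) ^ 2) * (1 + 3 * (γ - 1) * (1 + f t)))
        (𝓝[>] (0:ℝ))
        (𝓝 (-(1/2) * (1 + 0) * (1 + 3 * (γ - 1) * (1 + 0)))) :=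
      ((tendsto_const_nhds.mul (tendsto_const_nhds.add hK)).mul
        (tendsto_const_nhds.add (tendsto_const_nhds.mul (tendsto_const_nhds.add hf))))
    have hval : -(1/2 : ℝ) * (1 + 0) * (1 + 3 * (γ - 1) * (1 + 0)) = -(1/2) * (3 * γ - 2) := by
      ring
    rw [hval] at hmain
    exact hmain.congr' heq
  · intro h; nlinarith
end
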